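/- Suppose Assumptions A1, A2 and R1 hold, f and g are jointly continuous, Θ is compact, and fix data (u_i, y_i) with u_i ∈ 𝒰. Then for every d > 0 there exist E > 0 and Z > 0 such that: for all z with 0 ≤ z ≤ Z and all ε with 0 ≤ ε ≤ E, every θ̂ ∈ z-argmin{ Q_n(θ; ε) : θ ∈ Θ } satisfies dist(θ̂, argmin{ Q_n(θ) : θ ∈ Θ }) < d. -/

import Mathlib

open Set Metric Filter MeasureTheory ProbabilityTheory

noncomputable section

/-- Euclidean space ℝ^k. -/
abbrev Euc (k : ℕ) := EuclideanSpace ℝ (Fin k)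

/-- Feasible set `Φ(u,θ)` of FOP. -/
def Feas {d m p q : ℕ} (g : Euc d → Euc m → Euc p → Fin q → ℝ)
    (u : Euc m) (θ : Euc p) : Set (Euc d) :=
  {x | ∀ j, g x u θ j ≤ 0}

/-- Solution set `S(u,θ)` of FOP. -/
def Sol {d m p q : ℕ} (f : Euc d → Euc m → Euc p → ℝ)
    (g : Euc d → Euc m → Euc p → Fin q → ℝ) (u : Euc m) (θ : Euc p) : Set (Euc d) :=
  {x ∈ Feas g u θ | ∀ x' ∈ Feas g u θ, f x u θ ≤ f x' u θ}

/-- The sample-average risk `Q_n(θ)` of RISK-SAA. -/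
def Qn {d m p q : ℕ} (f : Euc d → Euc m → Euc p → ℝ)
    (g : Euc d → Euc m → Euc p → Fin q → ℝ) (n : ℕ)
    (u : Fin n → Euc m) (y : Fin n → Euc d) (θ : Euc p) : ℝ :=
  sInf ((fun x : Fin n → Euc d => (1 / n : ℝ) * ∑ i, ‖y i - x i‖ ^ 2) ''
    {x | ∀ i, x i ∈ Sol f g (u i) θ})

/-- The regularized sample-average risk `Q_n(θ; ε)` of R-DB-RISK-SAA. -/
def QnR {d m p q : ℕ} (f : Euc d → Euc m → Euc p → ℝ)
    (g : Euc d → Euc m → Euc p → Fin q → ℝ) (n : ℕ)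
    (u : Fin n → Euc m) (y : Fin n → Euc d) (θ : Euc p) (ε : ℝ) : ℝ :=
  sInf ((fun x : Fin n → Euc d => (1 / n : ℝ) * ∑ i, ‖y i - x i‖ ^ 2) ''
    {x | ∀ i, (∀ j, g (x i) (u i) θ j ≤ ε) ∧
      ∃ lam : Fin q → ℝ, (∀ j, 0 ≤ lam j) ∧
        ∀ x' : Euc d, f (x i) (u i) θ ≤ f x' (u i) θ + ∑ j, lam j * g x' (u i) θ j + ε})


lemma aux_nonpos {b K : ℝ} (h : ∀ t : ℝ, 0 < t → t * b ≤ K) : b ≤ 0 := by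
  by_contra hb
  push_neg at hb
  have ht : (0:ℝ) < max ((K+1)/b) 1 := lt_max_of_lt_right one_pos
  have h2 : (K+1)/b * b ≤ max ((K+1)/b) 1 * b :=
    mul_le_mul_of_nonneg_right (le_max_left _ _) hb.le
  rw [div_mul_cancel₀ _ (ne_of_gt hb)] at h2
  linarith [h _ ht]

lemma aux_le {c e K : ℝ} (h : ∀ δ : ℝ, 0 < δ → c + δ * e ≤ K) : c ≤ K := by
  by_contra hc
  push_neg at hc
  set δ := (c - K) / (2 * (|e| + 1)) with hδ
  have hden : 0 < 2 * (|e| + 1) := by positivity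
  have hδpos : 0 < δ := div_pos (by linarith) hden
  have habs : |δ * e| ≤ (c-K)/2 := by
    rw [abs_mul, abs_of_pos hδpos]
    calc δ * |e| ≤ δ * (|e|+1) := by nlinarith [abs_nonneg e]
      _ = (c-K)/2 := by rw [hδ]; field_simp
  have h1 : -((c-K)/2) ≤ δ * e := by
    have := neg_abs_le (δ*e); linarith [abs_nonneg (δ*e)]
  have := h δ hδpos
  linarith

/-- Strong Lagrangian duality / KKT multiplier existence under Slater's condition. -/
lemma strong_duality {d q : ℕ} (F : Euc d → ℝ) (G : Euc d → Fin q → ℝ)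
    (hF : ConvexOn ℝ Set.univ F) (hG : ∀ j, ConvexOn ℝ Set.univ (fun x => G x j))
    (xs : Euc d) (hmin : ∀ x', (∀ j, G x' j ≤ 0) → F xs ≤ F x')
    (xb : Euc d) (hxb : ∀ j, G xb j < 0) :
    ∃ lam : Fin q → ℝ, (∀ j, 0 ≤ lam j) ∧ ∀ x', F xs ≤ F x' + ∑ j, lam j * G x' j := by
  classical
  set C : Set ((Fin q → ℝ) × ℝ) := {p | ∃ x, (∀ j, G x j < p.1 j) ∧ F x < p.2} with hC
  have hCopen : IsOpen C := by
    have hCeq : C = ⋃ x : Euc d,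
        ((⋂ j, {p : (Fin q → ℝ) × ℝ | G x j < p.1 j}) ∩ {p | F x < p.2}) := by
      ext p
      simp only [hC, Set.mem_setOf_eq, Set.mem_iUnion, Set.mem_inter_iff, Set.mem_iInter]
    rw [hCeq]
    refine isOpen_iUnion fun x => IsOpen.inter ?_ ?_
    · exact isOpen_iInter_of_finite fun j =>
        isOpen_lt continuous_const ((continuous_apply j).comp continuous_fst)
    · exact isOpen_lt continuous_const continuous_snd
  have hCconv : Convex ℝ C := by
    rintro p ⟨x, hx1, hx2⟩ p' ⟨x', hx1', hx2'⟩ a b ha hb hab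
    refine ⟨a • x + b • x', fun j => ?_, ?_⟩
    · have hcv := (hG j).2 (Set.mem_univ x) (Set.mem_univ x') ha hb hab
      simp only [smul_eq_mul] at hcv
      have hlt : a * G x j + b * G x' j < a * p.1 j + b * p'.1 j := by
        rcases lt_or_ge 0 a with ha' | ha'
        · exact add_lt_add_of_lt_of_le (mul_lt_mul_of_pos_left (hx1 j) ha')
            (mul_le_mul_of_nonneg_left (hx1' j).le hb)
        · have ha0 : a = 0 := le_antisymm ha' ha
          have hb1 : b = 1 := by rw [ha0] at hab; linarith
          simp only [ha0, hb1, zero_mul, one_mul, zero_add]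
          exact hx1' j
      calc G (a • x + b • x') j ≤ a * G x j + b * G x' j := hcv
        _ < a * p.1 j + b * p'.1 j := hlt
        _ = (a • p + b • p').1 j := by
            simp [Prod.smul_fst, Prod.fst_add, Pi.add_apply, Pi.smul_apply, smul_eq_mul]
    · have hcv := hF.2 (Set.mem_univ x) (Set.mem_univ x') ha hb hab
      simp only [smul_eq_mul] at hcv
      have hlt : a * F x + b * F x' < a * p.2 + b * p'.2 := by
        rcases lt_or_ge 0 a with ha' | ha'
        · exact add_lt_add_of_lt_of_le (mul_lt_mul_of_pos_left hx2 ha')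
            (mul_le_mul_of_nonneg_left hx2'.le hb)
        · have ha0 : a = 0 := le_antisymm ha' ha
          have hb1 : b = 1 := by rw [ha0] at hab; linarith
          simp only [ha0, hb1, zero_mul, one_mul, zero_add]
          exact hx2'
      calc F (a • x + b • x') ≤ a * F x + b * F x' := hcv
        _ < a * p.2 + b * p'.2 := hlt
        _ = (a • p + b • p').2 := by
            simp [Prod.smul_snd, Prod.snd_add, smul_eq_mul]
  have hx0 : ((0 : Fin q → ℝ), F xs) ∉ C := by
    rintro ⟨x, h1, h2⟩
    exact absurd (hmin x fun j => (h1 j).le) (not_le.mpr h2)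
  obtain ⟨φ, hφ⟩ := geometric_hahn_banach_open_point hCconv hCopen hx0
  set b : ℝ := φ (0, 1) with hbdef
  set a : Fin q → ℝ := fun j => φ (Pi.single j 1, 0) with hadef
  have hsingle : ∀ r : Fin q → ℝ, ∑ j, Pi.single j (r j) = r := by
    intro r
    funext j'
    rw [Finset.sum_apply]
    simp [Pi.single_apply]
  have hdecomp : ∀ (r : Fin q → ℝ) (s : ℝ), φ (r, s) = (∑ j, r j * a j) + s * b := by
    intro r s
    have h1 : (r, s) = ((r, 0) : (Fin q → ℝ) × ℝ) + (0, s) := by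
      simp [Prod.mk_add_mk]
    have h2 : ((0 : Fin q → ℝ), s) = s • ((0 : Fin q → ℝ), (1:ℝ)) := by
      simp [Prod.smul_mk]
    have h3 : ((r, 0) : (Fin q → ℝ) × ℝ) = ∑ j, (r j) • ((Pi.single j 1 : Fin q → ℝ), (0:ℝ)) := by
      have : ∑ j, (r j) • ((Pi.single j 1 : Fin q → ℝ), (0:ℝ))
          = ((∑ j, (r j) • (Pi.single j 1 : Fin q → ℝ), (0:ℝ)) : (Fin q → ℝ) × ℝ) := by
        rw [Prod.ext_iff]
        constructor
        · rw [Prod.fst_sum]; simp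
        · rw [Prod.snd_sum]; simp
      rw [this]
      congr 1
      rw [← hsingle r]
      exact Finset.sum_congr rfl fun j _ => by
        rw [← Pi.single_smul]; simp
    rw [h1, map_add, h3, map_sum, h2, _root_.map_smul]
    simp only [_root_.map_smul, smul_eq_mul, hadef, hbdef]
  have hkey : ∀ (x : Euc d) (r : Fin q → ℝ) (s : ℝ), (∀ j, G x j < r j) → F x < s →
      (∑ j, r j * a j) + s * b < F xs * b := by
    intro x r s h1 h2
    have hthis := hφ (r, s) ⟨x, h1, h2⟩
    rw [hdecomp, hdecomp] at hthis
    have hz : ∑ j, (0 : Fin q → ℝ) j * a j = 0 := Finset.sum_eq_zero fun j _ => by simp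
    rwa [hz, zero_add] at hthis
  -- constant appearing below
  set c0 : ℝ := ∑ j, (G xs j + 1) * a j with hc0
  -- b ≤ 0
  have hb0 : b ≤ 0 := by
    apply aux_nonpos (K := F xs * b - c0 - (F xs + 1) * b)
    intro t ht
    have h := hkey xs (fun j => G xs j + 1) (F xs + 1 + t) (fun j => by simp) (by linarith)
    have hr : (F xs + 1 + t) * b = (F xs + 1) * b + t * b := by ring
    rw [hr] at h
    rw [← hc0] at h
    linarith
  -- a j ≤ 0
  have ha0 : ∀ j, a j ≤ 0 := by
    intro j0
    apply aux_nonpos (K := F xs * b - c0 - (F xs + 1) * b)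
    intro t ht
    have h := hkey xs (fun j => G xs j + 1 + (if j = j0 then t else 0)) (F xs + 1)
      (fun j => by by_cases h : j = j0 <;> simp [h] <;> linarith) (by linarith)
    have e1 : ∀ j ∈ Finset.univ, (G xs j + 1 + (if j = j0 then t else 0)) * a j
        = (G xs j + 1) * a j + (if j = j0 then t * a j else 0) := by
      intro j _; by_cases h : j = j0 <;> simp [h] <;> ring
    have hsum : ∑ j, (G xs j + 1 + (if j = j0 then t else 0)) * a j
        = c0 + t * a j0 := by
      rw [Finset.sum_congr rfl e1, Finset.sum_add_distrib,
        Finset.sum_ite_eq' Finset.univ j0 (fun j => t * a j)]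
      simp [hc0]
    rw [hsum] at h
    linarith
  -- main inequality
  have hmain : ∀ x, (∑ j, G x j * a j) + F x * b ≤ F xs * b := by
    intro x
    apply aux_le (e := (∑ j, a j) + b)
    intro δ hδ
    have h := hkey x (fun j => G x j + δ) (F x + δ) (fun j => by simp [hδ]) (by linarith)
    have e1 : ∀ j ∈ Finset.univ, (G x j + δ) * a j = G x j * a j + δ * a j := by
      intro j _; ring
    have hsum : ∑ j, (G x j + δ) * a j = (∑ j, G x j * a j) + δ * ∑ j, a j := by
      rw [Finset.sum_congr rfl e1, Finset.sum_add_distrib, Finset.mul_sum]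
    rw [hsum] at h
    nlinarith
  -- b < 0
  have hbne : b ≠ 0 := by
    intro hbz
    have hane : ∃ j, a j ≠ 0 := by
      by_contra hall
      push_neg at hall
      have h := hkey xs (fun j => G xs j + 1) (F xs + 1) (fun j => by simp) (by linarith)
      simp [hall, hbz] at h
    obtain ⟨j0, hj0⟩ := hane
    have hj0' : a j0 < 0 := lt_of_le_of_ne (ha0 j0) hj0
    have h1 := hmain xb
    rw [hbz, mul_zero, mul_zero] at h1
    have hterm : ∀ j ∈ Finset.univ, 0 ≤ G xb j * a j := fun j _ => by
      nlinarith [(hxb j).le, ha0 j]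
    have hpos : 0 < G xb j0 * a j0 := mul_pos_of_neg_of_neg (hxb j0) hj0'
    have : 0 < ∑ j, G xb j * a j :=
      Finset.sum_pos' hterm ⟨j0, Finset.mem_univ _, hpos⟩
    linarith
  have hbneg : b < 0 := lt_of_le_of_ne hb0 hbne
  -- conclude
  refine ⟨fun j => a j / b, fun j => ?_, fun x' => ?_⟩
  · show 0 ≤ a j / b
    rw [← neg_div_neg_eq]
    exact div_nonneg (neg_nonneg.mpr (ha0 j)) (neg_nonneg.mpr hbneg.le)
  · have h := hmain x'
    set S : ℝ := ∑ j, G x' j * a j with hS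
    have hdiv : F xs - F x' ≤ S / b := by
      rw [le_div_iff_of_neg hbneg]
      have : (F xs - F x') * b = F xs * b - F x' * b := by ring
      linarith
    have hSb : S / b = ∑ j, a j / b * G x' j := by
      rw [hS, Finset.sum_div]
      exact Finset.sum_congr rfl fun j _ => by ring
    linarith [hSb ▸ hdiv]


/-- Corollary 2 of Aswani–Shen–Siddiq: under A1, A2, R1 (with joint continuity and
compact `Θ`), for any `d > 0` there exist `E, Z > 0` such that any `z`-approximate
minimizer of `Q_n(·; ε)` (over `Θ`) with `0 ≤ z ≤ Z` and `0 ≤ ε ≤ E` is within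
distance `d` of the argmin set of `Q_n` over `Θ`. -/
theorem statement6 {d m p q : ℕ} (n : ℕ)
    (f : Euc d → Euc m → Euc p → ℝ) (g : Euc d → Euc m → Euc p → Fin q → ℝ)
    (𝒰 : Set (Euc m)) (Θ : Set (Euc p))
    (hf_cont : Continuous fun t : Euc d × Euc m × Euc p => f t.1 t.2.1 t.2.2)
    (hg_cont : ∀ j, Continuous fun t : Euc d × Euc m × Euc p => g t.1 t.2.1 t.2.2 j)
    (hf_conv : ∀ (uu : Euc m) (θθ : Euc p), ConvexOn ℝ Set.univ fun x => f x uu θθ)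
    (hg_conv : ∀ (uu : Euc m) (θθ : Euc p) (j : Fin q),
      ConvexOn ℝ Set.univ fun x => g x uu θθ j)
    (hΘ : Convex ℝ Θ) (hΘcpt : IsCompact Θ)
    (hR1 : ∀ uu ∈ 𝒰, ∀ θθ ∈ Θ, IsCompact (Feas g uu θθ) ∧
      ∃ xb ∈ Feas g uu θθ, ∀ j, g xb uu θθ j < 0)
    (hR1bd : ∃ M > 0, ∀ uu ∈ 𝒰, ∀ θθ ∈ Θ, ∀ x ∈ Feas g uu θθ, ‖x‖ ≤ M)
    (u : Fin n → Euc m) (y : Fin n → Euc d) (hu : ∀ i, u i ∈ 𝒰) :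
    ∀ dd > (0 : ℝ), ∃ E > (0 : ℝ), ∃ Z > (0 : ℝ),
      ∀ z, 0 ≤ z → z ≤ Z → ∀ ε, 0 ≤ ε → ε ≤ E →
        ∀ θh ∈ Θ,
          QnR f g n u y θh ε ≤ sInf ((fun θ' => QnR f g n u y θ' ε) '' Θ) + z →
          Metric.infDist θh {θ ∈ Θ | ∀ θ' ∈ Θ, Qn f g n u y θ ≤ Qn f g n u y θ'} < dd := by
  intro dd hdd
  by_contra hcon
  push_neg at hcon
  classical
  obtain ⟨M, hM, hMbd⟩ := hR1bd
  set A : Set (Euc p) := {θ | θ ∈ Θ ∧ ∀ θ' ∈ Θ, Qn f g n u y θ ≤ Qn f g n u y θ'} with hA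
  set V : (Fin n → Euc d) → ℝ := fun x => (1 / n : ℝ) * ∑ i, ‖y i - x i‖ ^ 2 with hV
  set RS : Euc p → ℝ → Set (Fin n → Euc d) := fun θθ ε =>
    {x | ∀ i, (∀ j, g (x i) (u i) θθ j ≤ ε) ∧
      ∃ lam : Fin q → ℝ, (∀ j, 0 ≤ lam j) ∧
        ∀ x' : Euc d, f (x i) (u i) θθ ≤ f x' (u i) θθ + ∑ j, lam j * g x' (u i) θθ j + ε}
    with hRS
  have hQn_eq : ∀ θθ, Qn f g n u y θθ
      = sInf (V '' {x | ∀ i, x i ∈ Sol f g (u i) θθ}) := fun _ => rfl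
  have hQnR_eq : ∀ θθ ε, QnR f g n u y θθ ε = sInf (V '' RS θθ ε) := fun _ _ => rfl
  have hV0 : ∀ x, 0 ≤ V x := fun x =>
    mul_nonneg (by positivity) (Finset.sum_nonneg fun i _ => by positivity)
  have hVcont : Continuous V := by
    apply continuous_const.mul
    exact continuous_finset_sum _ fun i _ =>
      ((continuous_const.sub (continuous_apply i)).norm.pow 2)
  have hbdd : ∀ S : Set (Fin n → Euc d), BddBelow (V '' S) := fun S =>
    ⟨0, by rintro _ ⟨x, _, rfl⟩; exact hV0 x⟩
  have hfc : ∀ i : Fin n, Continuous fun pr : Euc d × Euc p => f pr.1 (u i) pr.2 :=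
    fun i => hf_cont.comp (continuous_fst.prodMk (continuous_const.prodMk continuous_snd))
  have hgc : ∀ (i : Fin n) (j : Fin q),
      Continuous fun pr : Euc d × Euc p => g pr.1 (u i) pr.2 j :=
    fun i j => (hg_cont j).comp (continuous_fst.prodMk (continuous_const.prodMk continuous_snd))
  -- multipliers for any solution point
  have lamOf : ∀ (i : Fin n), ∀ θθ ∈ Θ, ∀ x ∈ Sol f g (u i) θθ,
      ∃ lam : Fin q → ℝ, (∀ j, 0 ≤ lam j) ∧
        ∀ x', f x (u i) θθ ≤ f x' (u i) θθ + ∑ j, lam j * g x' (u i) θθ j := by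
    intro i θθ hθ x hx
    obtain ⟨-, xbb, hxbbF, hxbbS⟩ := hR1 (u i) (hu i) θθ hθ
    exact strong_duality (fun x => f x (u i) θθ) (fun x j => g x (u i) θθ j)
      (hf_conv (u i) θθ) (fun j => hg_conv (u i) θθ j) x (fun x' hx' => hx.2 x' hx')
      xbb hxbbS
  -- existence of solutions
  have solver : ∀ (i : Fin n), ∀ θθ ∈ Θ, ∃ x, x ∈ Sol f g (u i) θθ := by
    intro i θθ hθ
    obtain ⟨hcpt, xbb, hxbbF, hxbbS⟩ := hR1 (u i) (hu i) θθ hθ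
    have hcont : Continuous fun x : Euc d => f x (u i) θθ :=
      (hfc i).comp (continuous_id.prodMk continuous_const)
    obtain ⟨x0, hx0F, hx0min⟩ := hcpt.exists_isMinOn ⟨xbb, hxbbF⟩ hcont.continuousOn
    exact ⟨x0, hx0F, fun x' hx' => isMinOn_iff.mp hx0min x' hx'⟩
  have solset_ne : ∀ θθ ∈ Θ, ∃ x : Fin n → Euc d, ∀ i, x i ∈ Sol f g (u i) θθ :=
    fun θθ hθ => ⟨fun i => (solver i θθ hθ).choose, fun i => (solver i θθ hθ).choose_spec⟩
  -- solutions lie in the regularized constraint set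
  have hRmem : ∀ θθ ∈ Θ, ∀ ε : ℝ, 0 ≤ ε → ∀ x : Fin n → Euc d,
      (∀ i, x i ∈ Sol f g (u i) θθ) → x ∈ RS θθ ε := by
    intro θθ hθ ε hε x hx i
    refine ⟨fun j => le_trans ((hx i).1 j) hε, ?_⟩
    obtain ⟨lam, hlam0, hlam⟩ := lamOf i θθ hθ (x i) (hx i)
    exact ⟨lam, hlam0, fun x' => le_trans (hlam x') (by linarith)⟩
  have hQn_le : ∀ θθ (x : Fin n → Euc d), (∀ i, x i ∈ Sol f g (u i) θθ) →
      Qn f g n u y θθ ≤ V x := fun θθ x hx => by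
    rw [hQn_eq]; exact csInf_le (hbdd _) ⟨x, hx, rfl⟩
  have hQnR_le_Qn : ∀ θθ ∈ Θ, ∀ ε : ℝ, 0 ≤ ε →
      QnR f g n u y θθ ε ≤ Qn f g n u y θθ := by
    intro θθ hθ ε hε
    rw [hQn_eq, hQnR_eq]
    obtain ⟨x0, hx0⟩ := solset_ne θθ hθ
    exact csInf_le_csInf (hbdd _) ⟨V x0, ⟨x0, hx0, rfl⟩⟩
      (Set.image_mono (fun x hx => hRmem θθ hθ ε hε x hx))
  have hQnR_nonneg : ∀ θθ ε, 0 ≤ QnR f g n u y θθ ε := by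
    intro θθ ε
    rw [hQnR_eq]
    apply Real.sInf_nonneg
    rintro _ ⟨x, _, rfl⟩
    exact hV0 x
  -- uniform upper bound on Qn over Θ
  set Cb : ℝ := ∑ i, (‖y i‖ + M) ^ 2 with hCb
  have hCb0 : 0 ≤ Cb := Finset.sum_nonneg fun i _ => by positivity
  have h1n : (1 / (n : ℝ)) ≤ 1 := by
    cases n with
    | zero => norm_num
    | succ k =>
      rw [div_le_one (by positivity)]
      exact_mod_cast Nat.succ_le_succ (Nat.zero_le k)
  have hQn_ub : ∀ θθ ∈ Θ, Qn f g n u y θθ ≤ Cb := by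
    intro θθ hθ
    obtain ⟨x0, hx0⟩ := solset_ne θθ hθ
    refine le_trans (hQn_le θθ x0 hx0) ?_
    have hterm : ∀ i ∈ Finset.univ, ‖y i - x0 i‖ ^ 2 ≤ (‖y i‖ + M) ^ 2 := by
      intro i _
      have hb : ‖x0 i‖ ≤ M := hMbd (u i) (hu i) θθ hθ (x0 i) (hx0 i).1
      have h1 : ‖y i - x0 i‖ ≤ ‖y i‖ + M := le_trans (norm_sub_le _ _) (by linarith)
      nlinarith [norm_nonneg (y i - x0 i)]
    calc V x0 ≤ 1 * ∑ i, (‖y i‖ + M) ^ 2 :=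
          mul_le_mul h1n (Finset.sum_le_sum hterm)
            (Finset.sum_nonneg fun i _ => by positivity) one_pos.le
      _ = Cb := by rw [one_mul]
  -- extract the contradiction sequences
  have hcon' : ∀ k : ℕ, ∃ z ε θh, (0 ≤ z ∧ z ≤ 1/((k:ℝ)+1)) ∧ (0 ≤ ε ∧ ε ≤ 1/((k:ℝ)+1))
      ∧ θh ∈ Θ ∧ (QnR f g n u y θh ε ≤ sInf ((fun θ' => QnR f g n u y θ' ε) '' Θ) + z)
      ∧ dd ≤ infDist θh A := by
    intro k
    have hk : (0:ℝ) < 1/((k:ℝ)+1) := by positivity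
    obtain ⟨z, hz0, hzZ, ε, hε0, hεE, θh, hθh, hq2, hfar⟩ := hcon (1/((k:ℝ)+1)) hk (1/((k:ℝ)+1)) hk
    exact ⟨z, ε, θh, ⟨hz0, hzZ⟩, ⟨hε0, hεE⟩, hθh, hq2, hfar⟩
  choose zs εs θs hzs hεs hθsΘ hqs hfar using hcon'
  -- choose near-optimal feasible points
  have hpick : ∀ k : ℕ, ∃ x, x ∈ RS (θs k) (εs k)
      ∧ V x < QnR f g n u y (θs k) (εs k) + 1/((k:ℝ)+1) := by
    intro k
    have hk : (0:ℝ) < 1/((k:ℝ)+1) := by positivity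
    have hne : (V '' RS (θs k) (εs k)).Nonempty := by
      obtain ⟨x0, hx0⟩ := solset_ne (θs k) (hθsΘ k)
      exact ⟨V x0, ⟨x0, hRmem (θs k) (hθsΘ k) (εs k) (hεs k).1 x0 hx0, rfl⟩⟩
    obtain ⟨v, ⟨x, hx, rfl⟩, hv⟩ := Real.lt_sInf_add_pos hne hk
    exact ⟨x, hx, by rw [hQnR_eq]; exact hv⟩
  choose xs hxsR hxsV using hpick
  have hk1 : ∀ k : ℕ, 1/((k:ℝ)+1) ≤ 1 := by
    intro k
    rw [div_le_one (by positivity)]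
    linarith [Nat.cast_nonneg (α := ℝ) k]
  have hVub : ∀ k, V (xs k) ≤ Cb + 1 := by
    intro k
    have h1 := (hxsV k).le
    have h2 := hQnR_le_Qn (θs k) (hθsΘ k) (εs k) (hεs k).1
    have h3 := hQn_ub (θs k) (hθsΘ k)
    linarith [hk1 k]
  set Rr : Fin n → ℝ := fun i => ‖y i‖ + Real.sqrt ((n:ℝ) * (Cb + 1)) with hRr
  have hball : ∀ k i, xs k i ∈ Metric.closedBall (0 : Euc d) (Rr i) := by
    intro k i
    have hn1 : (1:ℝ) ≤ (n:ℝ) := by exact_mod_cast i.pos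
    have hnpos : (0:ℝ) < (n:ℝ) := by linarith
    have hv : (1 / n : ℝ) * ∑ i', ‖y i' - xs k i'‖ ^ 2 ≤ Cb + 1 := hVub k
    have hsum : ∑ i', ‖y i' - xs k i'‖ ^ 2 ≤ (n:ℝ) * (Cb + 1) := by
      have heq : ∑ i', ‖y i' - xs k i'‖ ^ 2
          = (n:ℝ) * ((1 / n : ℝ) * ∑ i', ‖y i' - xs k i'‖ ^ 2) := by
        field_simp
      rw [heq]
      exact mul_le_mul_of_nonneg_left hv hnpos.le
    have hterm : ‖y i - xs k i‖ ^ 2 ≤ (n:ℝ) * (Cb + 1) :=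
      le_trans (Finset.single_le_sum (f := fun i' => ‖y i' - xs k i'‖ ^ 2)
        (fun i' _ => by positivity) (Finset.mem_univ i)) hsum
    have hsq : ‖y i - xs k i‖ ≤ Real.sqrt ((n:ℝ) * (Cb + 1)) := by
      rw [← Real.sqrt_sq (norm_nonneg (y i - xs k i))]
      exact Real.sqrt_le_sqrt hterm
    rw [mem_closedBall_zero_iff]
    calc ‖xs k i‖ = ‖y i - (y i - xs k i)‖ := by congr 1; abel
      _ ≤ ‖y i‖ + ‖y i - xs k i‖ := norm_sub_le _ _
      _ ≤ Rr i := by rw [hRr]; simp only []; linarith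
  -- compact subsequences
  obtain ⟨θstar, hθstarΘ, φ1, hφ1, hθlim⟩ := hΘcpt.tendsto_subseq hθsΘ
  have hKcpt : IsCompact (Set.pi Set.univ fun i : Fin n => Metric.closedBall (0 : Euc d) (Rr i)) :=
    isCompact_univ_pi fun i => isCompact_closedBall _ _
  have hmemK : ∀ k, xs (φ1 k) ∈ Set.pi Set.univ fun i : Fin n =>
      Metric.closedBall (0 : Euc d) (Rr i) :=
    fun k => Set.mem_univ_pi.mpr fun i => hball _ i
  obtain ⟨xstar, hxstarK, φ2, hφ2, hxlim⟩ := hKcpt.tendsto_subseq hmemK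
  set ψ : ℕ → ℕ := fun k => φ1 (φ2 k) with hψ
  have hψmono : StrictMono ψ := hφ1.comp hφ2
  have hψk : ∀ k : ℕ, (k:ℝ) ≤ (ψ k : ℝ) := fun k => by exact_mod_cast hψmono.le_apply
  have hθlim2 : Tendsto (fun k => θs (ψ k)) atTop (nhds θstar) := hθlim.comp hφ2.tendsto_atTop
  have hxlim2 : Tendsto (fun k => xs (ψ k)) atTop (nhds xstar) := hxlim
  have hinv_le : ∀ k : ℕ, 1/((ψ k:ℝ)+1) ≤ 1/((k:ℝ)+1) := fun k =>
    one_div_le_one_div_of_le (by positivity) (by linarith [hψk k])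
  have hinv0 : Tendsto (fun k : ℕ => 1/((k:ℝ)+1)) atTop (nhds 0) :=
    tendsto_one_div_add_atTop_nhds_zero_nat
  have hinvψ : Tendsto (fun k : ℕ => 1/((ψ k:ℝ)+1)) atTop (nhds 0) :=
    tendsto_of_tendsto_of_tendsto_of_le_of_le tendsto_const_nhds hinv0
      (fun k => by positivity) hinv_le
  have hεψ : Tendsto (fun k => εs (ψ k)) atTop (nhds 0) :=
    tendsto_of_tendsto_of_tendsto_of_le_of_le tendsto_const_nhds hinv0
      (fun k => (hεs (ψ k)).1) (fun k => le_trans (hεs (ψ k)).2 (hinv_le k))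
  have hzψ : Tendsto (fun k => zs (ψ k)) atTop (nhds 0) :=
    tendsto_of_tendsto_of_tendsto_of_le_of_le tendsto_const_nhds hinv0
      (fun k => (hzs (ψ k)).1) (fun k => le_trans (hzs (ψ k)).2 (hinv_le k))
  have hxilim : ∀ i, Tendsto (fun k => xs (ψ k) i) atTop (nhds (xstar i)) :=
    fun i => ((continuous_apply i).tendsto xstar).comp hxlim2
  -- feasibility of the limit
  have hfeas : ∀ (i : Fin n) (j : Fin q), g (xstar i) (u i) θstar j ≤ 0 := by
    intro i j
    have htd : Tendsto (fun k => g (xs (ψ k) i) (u i) (θs (ψ k)) j) atTop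
        (nhds (g (xstar i) (u i) θstar j)) :=
      ((hgc i j).tendsto (xstar i, θstar)).comp ((hxilim i).prodMk_nhds hθlim2)
    exact le_of_tendsto_of_tendsto' htd hεψ (fun k => ((hxsR (ψ k)) i).1 j)
  -- optimality of the limit
  have hopt : ∀ (i : Fin n), ∀ x' ∈ Feas g (u i) θstar,
      f (xstar i) (u i) θstar ≤ f x' (u i) θstar := by
    intro i x' hx'
    obtain ⟨-, xbb, hxbbF, hxbbS⟩ := hR1 (u i) (hu i) θstar hθstarΘ
    set RR : ℝ := max (Rr i) ‖xbb‖ with hRR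
    have hRR0 : 0 ≤ RR := le_trans (norm_nonneg xbb) (le_max_right _ _)
    have hcpt2 : IsCompact (Metric.closedBall (0 : Euc d) RR ×ˢ Θ) :=
      (isCompact_closedBall _ _).prod hΘcpt
    obtain ⟨B, hB⟩ := hcpt2.exists_bound_of_continuousOn (hfc i).continuousOn
    have hB0 : 0 ≤ B := le_trans (norm_nonneg _)
      (hB (0, θstar) ⟨mem_closedBall_self hRR0, hθstarΘ⟩)
    have hfbd : ∀ x'' ∈ Metric.closedBall (0 : Euc d) RR, ∀ θθ ∈ Θ,
        |f x'' (u i) θθ| ≤ B := fun x'' hx'' θθ hθθ => hB (x'', θθ) ⟨hx'', hθθ⟩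
    set c : Fin q → ℝ := fun j => g xbb (u i) θstar j with hc
    have hcneg : ∀ j, c j < 0 := hxbbS
    set Λ : Fin q → ℝ := fun j => (2*B+2) / (-(c j)/2) with hΛ
    have hΛ0 : ∀ j, 0 ≤ Λ j := fun j => div_nonneg (by linarith)
      (by have := hcneg j; linarith)
    -- eventually the Slater point is strictly feasible at θs (ψ k)
    have hsl : ∀ᶠ k in atTop, ∀ j, g xbb (u i) (θs (ψ k)) j ≤ c j / 2 := by
      rw [eventually_all]
      intro j
      have htd : Tendsto (fun k => g xbb (u i) (θs (ψ k)) j) atTop (nhds (c j)) :=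
        (((hgc i j).comp (continuous_const.prodMk continuous_id)).tendsto θstar).comp hθlim2
      have hlt : c j < c j / 2 := by have := hcneg j; linarith
      exact (htd.eventually_lt_const hlt).mono fun k hk => hk.le
    have hεle1 : ∀ k, εs (ψ k) ≤ 1 := fun k => le_trans (hεs (ψ k)).2 (le_trans (hinv_le k) (hk1 k))
    -- the key eventual inequality
    have hev : ∀ᶠ k in atTop, f (xs (ψ k) i) (u i) (θs (ψ k)) ≤ f x' (u i) (θs (ψ k))
        + ∑ j, Λ j * max (g x' (u i) (θs (ψ k)) j) 0 + εs (ψ k) := by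
      filter_upwards [hsl] with k hslk
      obtain ⟨lam, hlam0, hlam⟩ := ((hxsR (ψ k)) i).2
      -- xs (ψ k) i and xbb are in the ball of radius RR
      have hxmem : xs (ψ k) i ∈ Metric.closedBall (0 : Euc d) RR :=
        Metric.closedBall_subset_closedBall (le_max_left _ _) (hball (ψ k) i)
      have hxbbmem : xbb ∈ Metric.closedBall (0 : Euc d) RR := by
        rw [mem_closedBall_zero_iff]; exact le_max_right _ _
      have hf1 := hfbd _ hxmem (θs (ψ k)) (hθsΘ (ψ k))
      have hf2 := hfbd xbb hxbbmem (θs (ψ k)) (hθsΘ (ψ k))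
      -- bound each multiplier
      have hlambd : ∀ j0, lam j0 ≤ Λ j0 := by
        intro j0
        have hd := hlam xbb
        have hsum1 : ∑ j, lam j * g xbb (u i) (θs (ψ k)) j ≤ ∑ j, lam j * (c j / 2) :=
          Finset.sum_le_sum fun j _ => mul_le_mul_of_nonneg_left (hslk j) (hlam0 j)
        have hsum2 : ∑ j, lam j * (c j / 2) ≤ lam j0 * (c j0 / 2) := by
          have hneg := Finset.single_le_sum (f := fun j => -(lam j * (c j / 2)))
            (fun j _ => by nlinarith [hlam0 j, hcneg j]) (Finset.mem_univ j0)
          simp only [Finset.sum_neg_distrib] at hneg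
          linarith
        have habs1 := abs_le.mp hf1
        have habs2 := abs_le.mp hf2
        have hεk := hεle1 k
        have hfin : lam j0 * (-(c j0)/2) ≤ 2*B + 2 := by nlinarith
        rw [hΛ]
        have hpos : (0:ℝ) < -(c j0)/2 := by have := hcneg j0; linarith
        rw [le_div_iff₀ hpos]
        exact hfin
      have hd := hlam x'
      have hsum3 : ∑ j, lam j * g x' (u i) (θs (ψ k)) j
          ≤ ∑ j, Λ j * max (g x' (u i) (θs (ψ k)) j) 0 := by
        apply Finset.sum_le_sum
        intro j _
        calc lam j * g x' (u i) (θs (ψ k)) j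
            ≤ lam j * max (g x' (u i) (θs (ψ k)) j) 0 :=
              mul_le_mul_of_nonneg_left (le_max_left _ _) (hlam0 j)
          _ ≤ Λ j * max (g x' (u i) (θs (ψ k)) j) 0 :=
              mul_le_mul_of_nonneg_right (hlambd j) (le_max_right _ _)
      linarith
    -- pass to the limit
    have hLHS : Tendsto (fun k => f (xs (ψ k) i) (u i) (θs (ψ k))) atTop
        (nhds (f (xstar i) (u i) θstar)) :=
      ((hfc i).tendsto (xstar i, θstar)).comp ((hxilim i).prodMk_nhds hθlim2)
    have hRHS : Tendsto (fun k => f x' (u i) (θs (ψ k))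
        + ∑ j, Λ j * max (g x' (u i) (θs (ψ k)) j) 0 + εs (ψ k)) atTop
        (nhds (f x' (u i) θstar + ∑ j, Λ j * max (g x' (u i) θstar j) 0 + 0)) := by
      apply Tendsto.add _ hεψ
      apply Tendsto.add
      · exact (((hfc i).comp (continuous_const.prodMk continuous_id)).tendsto θstar).comp hθlim2
      · apply tendsto_finset_sum
        intro j _
        apply Tendsto.const_mul
        exact ((((hgc i j).comp (continuous_const.prodMk continuous_id)).tendsto
          θstar).comp hθlim2).max tendsto_const_nhds
    have hzero : ∑ j, Λ j * max (g x' (u i) θstar j) 0 = 0 :=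
      Finset.sum_eq_zero fun j _ => by rw [max_eq_right (hx' j), mul_zero]
    have hfinal := le_of_tendsto_of_tendsto hLHS hRHS hev
    rw [hzero] at hfinal
    linarith
  have hxstarSol : ∀ i, xstar i ∈ Sol f g (u i) θstar :=
    fun i => ⟨fun j => hfeas i j, hopt i⟩
  -- θstar is a minimizer of Qn over Θ
  have hsInf_le : ∀ θ' ∈ Θ, ∀ ε : ℝ,
      sInf ((fun θ'' => QnR f g n u y θ'' ε) '' Θ) ≤ QnR f g n u y θ' ε :=
    fun θ' hθ' ε => csInf_le ⟨0, by rintro _ ⟨t, ht, rfl⟩; exact hQnR_nonneg t ε⟩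
      (Set.mem_image_of_mem _ hθ')
  have hchain : ∀ θ' ∈ Θ, ∀ k, V (xs (ψ k))
      ≤ Qn f g n u y θ' + (zs (ψ k) + 1/((ψ k:ℝ)+1)) := by
    intro θ' hθ' k
    have h1 := (hxsV (ψ k)).le
    have h2 := hqs (ψ k)
    have h3 := hsInf_le θ' hθ' (εs (ψ k))
    have h4 := hQnR_le_Qn θ' hθ' (εs (ψ k)) (hεs (ψ k)).1
    linarith
  have hVlim : Tendsto (fun k => V (xs (ψ k))) atTop (nhds (V xstar)) :=
    (hVcont.tendsto xstar).comp hxlim2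
  have hQnstar : ∀ θ' ∈ Θ, Qn f g n u y θstar ≤ Qn f g n u y θ' := by
    intro θ' hθ'
    have hRHS : Tendsto (fun k => Qn f g n u y θ' + (zs (ψ k) + 1/((ψ k:ℝ)+1))) atTop
        (nhds (Qn f g n u y θ' + (0 + 0))) :=
      tendsto_const_nhds.add (hzψ.add hinvψ)
    have hle : V xstar ≤ Qn f g n u y θ' + (0 + 0) :=
      le_of_tendsto_of_tendsto' hVlim hRHS (hchain θ' hθ')
    have := hQn_le θstar xstar hxstarSol
    linarith
  have hθstarA : θstar ∈ A := ⟨hθstarΘ, hQnstar⟩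
  have hdist : dd ≤ infDist θstar A := by
    have hcont : Tendsto (fun k => infDist (θs (ψ k)) A) atTop (nhds (infDist θstar A)) :=
      ((continuous_infDist_pt A).tendsto θstar).comp hθlim2
    exact le_of_tendsto_of_tendsto' tendsto_const_nhds hcont (fun k => hfar (ψ k))
  rw [infDist_zero_of_mem hθstarA] at hdist
  linarith
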